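/- Let S be a finite nonempty set of positive integers, let c : S → ℤ, and set g := Σ_{D∈S} c(D)·g_D ∈ M. Let w := max_{D∈S} ⌊v_p(D)/2⌋, where v_p denotes the p-adic valuation. Then for every integer n ≥ w there exists x ∈ M such that T_{n+2}(g) − T_n(g) = p^{n−w}·x; that is, T_{n+2}(g) − T_n(g) ≡ 0 modulo p^{n−w}·M. -/

import Mathlib

def cc (P e : ℤ) (n v j : ℕ) : ℤ :=
  if j < n - v then e ^ (n - v - j) * P ^ j
  else if v - n ≤ j ∧ j ≤ n + v ∧ (n + v - j) % 2 = 0 then P ^ ((j + n - v) / 2)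
  else 0

lemma cc_low (P e : ℤ) {n v j : ℕ} (h : j < n - v) :
    cc P e n v j = e ^ (n - v - j) * P ^ j := by
  unfold cc; rw [if_pos h]

lemma cc_high (P e : ℤ) {n v j : ℕ} (h1 : ¬ j < n - v) (h2 : v - n ≤ j) (h3 : j ≤ n + v)
    (h4 : (n + v - j) % 2 = 0) : cc P e n v j = P ^ ((j + n - v) / 2) := by
  unfold cc; rw [if_neg h1, if_pos ⟨h2, h3, h4⟩]

lemma cc_nul (P e : ℤ) {n v j : ℕ} (h1 : ¬ j < n - v)
    (h2 : ¬ (v - n ≤ j ∧ j ≤ n + v ∧ (n + v - j) % 2 = 0)) : cc P e n v j = 0 := by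
  unfold cc; rw [if_neg h1, if_neg h2]

lemma cc_bound (P e : ℤ) {n v j : ℕ} (h : n + v < j) : cc P e n v j = 0 :=
  cc_nul P e (by omega) (by omega)

lemma cc_rec (P e : ℤ) (n v m : ℕ) :
    cc P e (n + 2) v m
      = cc P e (n + 1) v (m + 1)
        + (if m = 0 then e * cc P e (n + 1) v 0 else P * cc P e (n + 1) v (m - 1))
        - P * cc P e n v m := by
  rcases le_or_gt v n with hvn | hvn
  · -- Case I : v ≤ n
    obtain ⟨q, rfl⟩ := Nat.exists_eq_add_of_le hvn
    by_cases hm0 : m = 0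
    · subst hm0
      rw [if_pos rfl]
      by_cases hq0 : q = 0
      · subst hq0
        have A1 : cc P e (v + 0 + 2) v 0 = e ^ 2 * P ^ 0 := by
          have h : v + 0 + 2 - v - 0 = 2 := by omega
          rw [cc_low P e (by omega), h]
        have A2 : cc P e (v + 0 + 1) v (0 + 1) = P ^ 1 := by
          have h : 0 + 1 + (v + 0 + 1) - v = 2 := by omega
          rw [cc_high P e (by omega) (by omega) (by omega) (by omega), h]
        have A3 : cc P e (v + 0 + 1) v 0 = e ^ 1 * P ^ 0 := by
          have h : v + 0 + 1 - v - 0 = 1 := by omega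
          rw [cc_low P e (by omega), h]
        have A4 : cc P e (v + 0) v 0 = P ^ 0 := by
          have h : 0 + (v + 0) - v = 0 := by omega
          rw [cc_high P e (by omega) (by omega) (by omega) (by omega), h]
        rw [A1, A2, A3, A4]; ring
      · have A1 : cc P e (v + q + 2) v 0 = e ^ (q + 2) * P ^ 0 := by
          have h : v + q + 2 - v - 0 = q + 2 := by omega
          rw [cc_low P e (by omega), h]
        have A2 : cc P e (v + q + 1) v (0 + 1) = e ^ q * P ^ 1 := by
          have h : v + q + 1 - v - (0 + 1) = q := by omega
          rw [cc_low P e (by omega), h]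
        have A3 : cc P e (v + q + 1) v 0 = e ^ (q + 1) * P ^ 0 := by
          have h : v + q + 1 - v - 0 = q + 1 := by omega
          rw [cc_low P e (by omega), h]
        have A4 : cc P e (v + q) v 0 = e ^ q * P ^ 0 := by
          have h : v + q - v - 0 = q := by omega
          rw [cc_low P e (by omega), h]
        rw [A1, A2, A3, A4]; ring
    · obtain ⟨m', rfl⟩ : ∃ k, m = k + 1 := ⟨m - 1, by omega⟩
      rw [if_neg hm0, Nat.add_sub_cancel]
      by_cases hb1 : m' + 1 < q
      · -- I.B : 1 ≤ m < q
        have A1 : cc P e (v + q + 2) v (m' + 1) = e ^ (q - m' - 1 + 2) * P ^ (m' + 1) := by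
          have h : v + q + 2 - v - (m' + 1) = q - m' - 1 + 2 := by omega
          rw [cc_low P e (by omega), h]
        have A2 : cc P e (v + q + 1) v (m' + 1 + 1) = e ^ (q - m' - 1) * P ^ (m' + 1 + 1) := by
          have h : v + q + 1 - v - (m' + 1 + 1) = q - m' - 1 := by omega
          rw [cc_low P e (by omega), h]
        have A3 : cc P e (v + q + 1) v m' = e ^ (q - m' - 1 + 2) * P ^ m' := by
          have h : v + q + 1 - v - m' = q - m' - 1 + 2 := by omega
          rw [cc_low P e (by omega), h]
        have A4 : cc P e (v + q) v (m' + 1) = e ^ (q - m' - 1) * P ^ (m' + 1) := by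
          have h : v + q - v - (m' + 1) = q - m' - 1 := by omega
          rw [cc_low P e (by omega), h]
        rw [A1, A2, A3, A4]; ring
      · by_cases hb2 : m' + 1 = q
        · -- I.C : m = q ≥ 1
          subst hb2
          have A1 : cc P e (v + (m' + 1) + 2) v (m' + 1) = e ^ 2 * P ^ (m' + 1) := by
            have h : v + (m' + 1) + 2 - v - (m' + 1) = 2 := by omega
            rw [cc_low P e (by omega), h]
          have A2 : cc P e (v + (m' + 1) + 1) v (m' + 1 + 1) = P ^ (m' + 2) := by
            have h : m' + 1 + 1 + (v + (m' + 1) + 1) - v = 2 * (m' + 2) := by omega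
            rw [cc_high P e (by omega) (by omega) (by omega) (by omega), h]
            norm_num
          have A3 : cc P e (v + (m' + 1) + 1) v m' = e ^ 2 * P ^ m' := by
            have h : v + (m' + 1) + 1 - v - m' = 2 := by omega
            rw [cc_low P e (by omega), h]
          have A4 : cc P e (v + (m' + 1)) v (m' + 1) = P ^ (m' + 1) := by
            have h : m' + 1 + (v + (m' + 1)) - v = 2 * (m' + 1) := by omega
            rw [cc_high P e (by omega) (by omega) (by omega) (by omega), h]
            norm_num
          rw [A1, A2, A3, A4]; ring
        · by_cases hb3 : m' = q
          · -- I.D0 : m = q + 1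
            subst hb3
            have A1 : cc P e (v + m' + 2) v (m' + 1) = e ^ 1 * P ^ (m' + 1) := by
              have h : v + m' + 2 - v - (m' + 1) = 1 := by omega
              rw [cc_low P e (by omega), h]
            have A2 : cc P e (v + m' + 1) v (m' + 1 + 1) = 0 :=
              cc_nul P e (by omega) (by omega)
            have A3 : cc P e (v + m' + 1) v m' = e ^ 1 * P ^ m' := by
              have h : v + m' + 1 - v - m' = 1 := by omega
              rw [cc_low P e (by omega), h]
            have A4 : cc P e (v + m') v (m' + 1) = 0 :=
              cc_nul P e (by omega) (by omega)
            rw [A1, A2, A3, A4]; ring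
          · -- m ≥ q + 2
            by_cases hpar : (q + m' + 1) % 2 = 0
            · by_cases hc1 : m' + 1 ≤ q + 2 * v
              · -- on-lattice, interior
                have A1 : cc P e (v + q + 2) v (m' + 1) = P ^ ((m' + q + 1) / 2 + 1) := by
                  have h : m' + 1 + (v + q + 2) - v = 2 * ((m' + q + 1) / 2 + 1) := by omega
                  rw [cc_high P e (by omega) (by omega) (by omega) (by omega), h]
                  congr 1; omega
                have A2 : cc P e (v + q + 1) v (m' + 1 + 1) = P ^ ((m' + q + 1) / 2 + 1) := by
                  have h : m' + 1 + 1 + (v + q + 1) - v = 2 * ((m' + q + 1) / 2 + 1) := by omega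
                  rw [cc_high P e (by omega) (by omega) (by omega) (by omega), h]
                  congr 1; omega
                have A3 : cc P e (v + q + 1) v m' = P ^ ((m' + q + 1) / 2) := by
                  have h : m' + (v + q + 1) - v = 2 * ((m' + q + 1) / 2) := by omega
                  rw [cc_high P e (by omega) (by omega) (by omega) (by omega), h]
                  congr 1; omega
                have A4 : cc P e (v + q) v (m' + 1) = P ^ ((m' + q + 1) / 2) := by
                  have h : m' + 1 + (v + q) - v = 2 * ((m' + q + 1) / 2) := by omega
                  rw [cc_high P e (by omega) (by omega) (by omega) (by omega), h]
                  congr 1; omega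
                rw [A1, A2, A3, A4]; ring
              · by_cases hc2 : m' + 1 = q + 2 * v + 2
                · -- top boundary
                  have A1 : cc P e (v + q + 2) v (m' + 1) = P ^ (q + v + 2) := by
                    have h : m' + 1 + (v + q + 2) - v = 2 * (q + v + 2) := by omega
                    rw [cc_high P e (by omega) (by omega) (by omega) (by omega), h]
                    congr 1; omega
                  have A2 : cc P e (v + q + 1) v (m' + 1 + 1) = 0 :=
                    cc_nul P e (by omega) (by omega)
                  have A3 : cc P e (v + q + 1) v m' = P ^ (q + v + 1) := by
                    have h : m' + (v + q + 1) - v = 2 * (q + v + 1) := by omega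
                    rw [cc_high P e (by omega) (by omega) (by omega) (by omega), h]
                    congr 1; omega
                  have A4 : cc P e (v + q) v (m' + 1) = 0 :=
                    cc_nul P e (by omega) (by omega)
                  rw [A1, A2, A3, A4]; ring
                · -- beyond everything
                  have A1 : cc P e (v + q + 2) v (m' + 1) = 0 :=
                    cc_nul P e (by omega) (by omega)
                  have A2 : cc P e (v + q + 1) v (m' + 1 + 1) = 0 :=
                    cc_nul P e (by omega) (by omega)
                  have A3 : cc P e (v + q + 1) v m' = 0 :=
                    cc_nul P e (by omega) (by omega)
                  have A4 : cc P e (v + q) v (m' + 1) = 0 :=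
                    cc_nul P e (by omega) (by omega)
                  rw [A1, A2, A3, A4]; ring
            · -- off-lattice parity
              have A1 : cc P e (v + q + 2) v (m' + 1) = 0 :=
                cc_nul P e (by omega) (by omega)
              have A2 : cc P e (v + q + 1) v (m' + 1 + 1) = 0 :=
                cc_nul P e (by omega) (by omega)
              have A3 : cc P e (v + q + 1) v m' = 0 :=
                cc_nul P e (by omega) (by omega)
              have A4 : cc P e (v + q) v (m' + 1) = 0 :=
                cc_nul P e (by omega) (by omega)
              rw [A1, A2, A3, A4]; ring
  · -- Case II : n < v
    obtain ⟨q, rfl⟩ : ∃ q, v = n + q + 1 := ⟨v - n - 1, by omega⟩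
    by_cases hm0 : m = 0
    · subst hm0
      rw [if_pos rfl]
      by_cases hq0 : q = 0
      · subst hq0
        have A1 : cc P e (n + 2) (n + 0 + 1) 0 = e ^ 1 * P ^ 0 := by
          have h : n + 2 - (n + 0 + 1) - 0 = 1 := by omega
          rw [cc_low P e (by omega), h]
        have A2 : cc P e (n + 1) (n + 0 + 1) (0 + 1) = 0 :=
          cc_nul P e (by omega) (by omega)
        have A3 : cc P e (n + 1) (n + 0 + 1) 0 = P ^ 0 := by
          have h : 0 + (n + 1) - (n + 0 + 1) = 0 := by omega
          rw [cc_high P e (by omega) (by omega) (by omega) (by omega), h]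
        have A4 : cc P e n (n + 0 + 1) 0 = 0 :=
          cc_nul P e (by omega) (by omega)
        rw [A1, A2, A3, A4]; ring
      · by_cases hq1 : q = 1
        · subst hq1
          have A1 : cc P e (n + 2) (n + 1 + 1) 0 = P ^ 0 := by
            have h : 0 + (n + 2) - (n + 1 + 1) = 0 := by omega
            rw [cc_high P e (by omega) (by omega) (by omega) (by omega), h]
          have A2 : cc P e (n + 1) (n + 1 + 1) (0 + 1) = P ^ 0 := by
            have h : 0 + 1 + (n + 1) - (n + 1 + 1) = 0 := by omega
            rw [cc_high P e (by omega) (by omega) (by omega) (by omega), h]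
          have A3 : cc P e (n + 1) (n + 1 + 1) 0 = 0 :=
            cc_nul P e (by omega) (by omega)
          have A4 : cc P e n (n + 1 + 1) 0 = 0 :=
            cc_nul P e (by omega) (by omega)
          rw [A1, A2, A3, A4]; ring
        · have A1 : cc P e (n + 2) (n + q + 1) 0 = 0 :=
            cc_nul P e (by omega) (by omega)
          have A2 : cc P e (n + 1) (n + q + 1) (0 + 1) = 0 :=
            cc_nul P e (by omega) (by omega)
          have A3 : cc P e (n + 1) (n + q + 1) 0 = 0 :=
            cc_nul P e (by omega) (by omega)
          have A4 : cc P e n (n + q + 1) 0 = 0 :=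
            cc_nul P e (by omega) (by omega)
          rw [A1, A2, A3, A4]; ring
    · obtain ⟨m', rfl⟩ : ∃ k, m = k + 1 := ⟨m - 1, by omega⟩
      rw [if_neg hm0, Nat.add_sub_cancel]
      by_cases hpar : (q + m') % 2 = 0
      · by_cases hd1 : m' + 1 + 1 < q
        · -- below everything
          have A1 : cc P e (n + 2) (n + q + 1) (m' + 1) = 0 :=
            cc_nul P e (by omega) (by omega)
          have A2 : cc P e (n + 1) (n + q + 1) (m' + 1 + 1) = 0 :=
            cc_nul P e (by omega) (by omega)
          have A3 : cc P e (n + 1) (n + q + 1) m' = 0 :=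
            cc_nul P e (by omega) (by omega)
          have A4 : cc P e n (n + q + 1) (m' + 1) = 0 :=
            cc_nul P e (by omega) (by omega)
          rw [A1, A2, A3, A4]; ring
        · by_cases hd2 : m' + 1 + 1 = q
          · -- bottom boundary m + 1 = q - 1 ... i.e. m'+1 = q-1
            have A1 : cc P e (n + 2) (n + q + 1) (m' + 1) = P ^ 0 := by
              have h : m' + 1 + (n + 2) - (n + q + 1) = 0 := by omega
              rw [cc_high P e (by omega) (by omega) (by omega) (by omega), h]
            have A2 : cc P e (n + 1) (n + q + 1) (m' + 1 + 1) = P ^ 0 := by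
              have h : m' + 1 + 1 + (n + 1) - (n + q + 1) = 0 := by omega
              rw [cc_high P e (by omega) (by omega) (by omega) (by omega), h]
            have A3 : cc P e (n + 1) (n + q + 1) m' = 0 :=
              cc_nul P e (by omega) (by omega)
            have A4 : cc P e n (n + q + 1) (m' + 1) = 0 :=
              cc_nul P e (by omega) (by omega)
            rw [A1, A2, A3, A4]; ring
          · by_cases he1 : m' + 1 ≤ n + (n + q + 1)
            · -- interior
              have A1 : cc P e (n + 2) (n + q + 1) (m' + 1) = P ^ ((m' - q) / 2 + 1) := by
                have h : m' + 1 + (n + 2) - (n + q + 1) = 2 * ((m' - q) / 2 + 1) := by omega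
                rw [cc_high P e (by omega) (by omega) (by omega) (by omega), h]
                congr 1; omega
              have A2 : cc P e (n + 1) (n + q + 1) (m' + 1 + 1) = P ^ ((m' - q) / 2 + 1) := by
                have h : m' + 1 + 1 + (n + 1) - (n + q + 1) = 2 * ((m' - q) / 2 + 1) := by omega
                rw [cc_high P e (by omega) (by omega) (by omega) (by omega), h]
                congr 1; omega
              have A3 : cc P e (n + 1) (n + q + 1) m' = P ^ ((m' - q) / 2) := by
                have h : m' + (n + 1) - (n + q + 1) = 2 * ((m' - q) / 2) := by omega
                rw [cc_high P e (by omega) (by omega) (by omega) (by omega), h]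
                congr 1; omega
              have A4 : cc P e n (n + q + 1) (m' + 1) = P ^ ((m' - q) / 2) := by
                have h : m' + 1 + n - (n + q + 1) = 2 * ((m' - q) / 2) := by omega
                rw [cc_high P e (by omega) (by omega) (by omega) (by omega), h]
                congr 1; omega
              rw [A1, A2, A3, A4]; ring
            · by_cases he2 : m' + 1 = n + (n + q + 1) + 2
              · -- top boundary
                have A1 : cc P e (n + 2) (n + q + 1) (m' + 1) = P ^ (n + 2) := by
                  have h : m' + 1 + (n + 2) - (n + q + 1) = 2 * (n + 2) := by omega
                  rw [cc_high P e (by omega) (by omega) (by omega) (by omega), h]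
                  congr 1; omega
                have A2 : cc P e (n + 1) (n + q + 1) (m' + 1 + 1) = 0 :=
                  cc_nul P e (by omega) (by omega)
                have A3 : cc P e (n + 1) (n + q + 1) m' = P ^ (n + 1) := by
                  have h : m' + (n + 1) - (n + q + 1) = 2 * (n + 1) := by omega
                  rw [cc_high P e (by omega) (by omega) (by omega) (by omega), h]
                  congr 1; omega
                have A4 : cc P e n (n + q + 1) (m' + 1) = 0 :=
                  cc_nul P e (by omega) (by omega)
                rw [A1, A2, A3, A4]; ring
              · -- beyond everything
                have A1 : cc P e (n + 2) (n + q + 1) (m' + 1) = 0 :=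
                  cc_nul P e (by omega) (by omega)
                have A2 : cc P e (n + 1) (n + q + 1) (m' + 1 + 1) = 0 :=
                  cc_nul P e (by omega) (by omega)
                have A3 : cc P e (n + 1) (n + q + 1) m' = 0 :=
                  cc_nul P e (by omega) (by omega)
                have A4 : cc P e n (n + q + 1) (m' + 1) = 0 :=
                  cc_nul P e (by omega) (by omega)
                rw [A1, A2, A3, A4]; ring
      · -- parity fails : everything vanishes
        have A1 : cc P e (n + 2) (n + q + 1) (m' + 1) = 0 :=
          cc_nul P e (by omega) (by omega)
        have A2 : cc P e (n + 1) (n + q + 1) (m' + 1 + 1) = 0 :=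
          cc_nul P e (by omega) (by omega)
        have A3 : cc P e (n + 1) (n + q + 1) m' = 0 :=
          cc_nul P e (by omega) (by omega)
        have A4 : cc P e n (n + q + 1) (m' + 1) = 0 :=
          cc_nul P e (by omega) (by omega)
        rw [A1, A2, A3, A4]; ring

section

variable {M : Type*} [AddCommGroup M] [Module ℤ M]

lemma zsmul_sum {ι : Type*} (z : ℤ) (s : Finset ι) (f : ι → M) :
    z • ∑ i ∈ s, f i = ∑ i ∈ s, z • f i := map_sum (zsmulAddGroupHom z) f s

lemma zsmul_apply (z : ℤ) (S : M →ₗ[ℤ] M) (x : M) : (z • S) x = z • S x := by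
  induction z using Int.induction_on with
  | zero => rw [zero_zsmul, zero_zsmul, LinearMap.zero_apply]
  | succ k ih => rw [add_zsmul, add_zsmul, one_zsmul, one_zsmul, LinearMap.add_apply, ih]
  | pred k ih =>
      rw [sub_zsmul, sub_zsmul, one_zsmul, one_zsmul, LinearMap.add_apply,
        LinearMap.neg_apply, ih]

lemma sub_zsmul' (a : M) (m n : ℤ) : (m - n) • a = m • a - n • a := by
  rw [sub_zsmul, sub_eq_add_neg]

lemma sum_one_spike (h : ℕ → M) (a : ℤ) (N i : ℕ) (hi : i < N) (f : ℕ → ℤ)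
    (hf : ∀ j, f j = if j = i then a else 0) :
    ∑ j ∈ Finset.range N, f j • h j = a • h i := by
  rw [Finset.sum_congr rfl fun j _ => by rw [hf j, ite_smul, zero_zsmul]]
  rw [Finset.sum_ite_eq', if_pos (Finset.mem_range.mpr hi)]

lemma sum_two_spikes (h : ℕ → M) (a b : ℤ) (N i k : ℕ) (hi : i < N) (hk : k < N)
    (f : ℕ → ℤ) (hf : ∀ j, f j = (if j = i then a else 0) + (if j = k then b else 0)) :
    ∑ j ∈ Finset.range N, f j • h j = a • h i + b • h k := by
  rw [Finset.sum_congr rfl fun j _ =>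
    by rw [hf j, add_zsmul, ite_smul, ite_smul, zero_zsmul]]
  rw [Finset.sum_add_distrib, Finset.sum_ite_eq', Finset.sum_ite_eq',
    if_pos (Finset.mem_range.mpr hi), if_pos (Finset.mem_range.mpr hk)]

lemma Tsum (T : M →ₗ[ℤ] M) (h : ℕ → M) (P e : ℤ)
    (hR0 : T (h 0) = e • h 0 + P • h 1)
    (hR1 : ∀ j : ℕ, T (h (j + 1)) = h j + P • h (j + 2))
    (a : ℕ → ℤ) (B : ℕ) (hB1 : a (B + 1) = 0) (hB2 : a (B + 2) = 0) :
    T (∑ j ∈ Finset.range (B + 1 + 1), a j • h j)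
      = ∑ m ∈ Finset.range (B + 1 + 1),
          (a (m + 1) + (if m = 0 then e * a 0 else P * a (m - 1))) • h m := by
  have key : ∀ C : ℕ, T (∑ j ∈ Finset.range (C + 1), a j • h j)
      = (e * a 0) • h 0 + (∑ j ∈ Finset.range C, a (j + 1) • h j)
        + ∑ j ∈ Finset.range (C + 1), (P * a j) • h (j + 1) := by
    intro C
    induction C with
    | zero =>
        simp only [zero_add, Finset.sum_range_one, Finset.range_zero, Finset.sum_empty, add_zero]
        rw [map_zsmul, hR0, zsmul_add, ← mul_zsmul, ← mul_zsmul,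
          mul_comm e (a 0), mul_comm P (a 0)]
    | succ C ih =>
        rw [Finset.sum_range_succ (f := fun j => a j • h j), map_add, ih, map_zsmul, hR1 C,
          Finset.sum_range_succ (f := fun j => a (j + 1) • h j),
          Finset.sum_range_succ (f := fun j => (P * a j) • h (j + 1)) (n := C + 1)]
        rw [zsmul_add, ← mul_zsmul, mul_comm (a (C + 1)) P]
        abel
  rw [key (B + 1)]
  rw [Finset.sum_range_succ' (f := fun m => (a (m + 1)
    + (if m = 0 then e * a 0 else P * a (m - 1))) • h m) (n := B + 1)]
  have step1 : ∀ k : ℕ, (a (k + 1 + 1)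
        + (if k + 1 = 0 then e * a 0 else P * a (k + 1 - 1))) • h (k + 1)
      = a (k + 2) • h (k + 1) + (P * a k) • h (k + 1) := by
    intro k
    rw [if_neg (Nat.succ_ne_zero k), Nat.add_sub_cancel, add_zsmul]
  rw [Finset.sum_congr rfl fun k _ => step1 k, Finset.sum_add_distrib]
  rw [Finset.sum_range_succ (f := fun k => a (k + 2) • h (k + 1)), hB2, zero_zsmul, add_zero]
  rw [Finset.sum_range_succ (f := fun j => (P * a j) • h (j + 1)) (n := B + 1), hB1,
    mul_zero, zero_zsmul, add_zero]
  rw [Finset.sum_range_succ' (f := fun j => a (j + 1) • h j) (n := B),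
    Finset.sum_congr rfl (fun k _ =>
      show a (k + 1 + 1) • h (k + 1) = a (k + 2) • h (k + 1) from by norm_num)]
  simp only [reduceIte, add_zsmul]
  abel

variable (p : ℕ) (T : M →ₗ[ℤ] M) (Tn : ℕ → M →ₗ[ℤ] M) (h : ℕ → M) (e : ℤ)

lemma Tn_formula
    (hTn0 : Tn 0 = LinearMap.id) (hTn1 : Tn 1 = T)
    (hTnrec : ∀ k : ℕ, Tn (k + 2) = T ∘ₗ Tn (k + 1) - (p : ℤ) • Tn k)
    (hR0 : T (h 0) = e • h 0 + (p : ℤ) • h 1)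
    (hR1 : ∀ j : ℕ, T (h (j + 1)) = h j + (p : ℤ) • h (j + 2)) :
    ∀ n v : ℕ, Tn n (h v) = ∑ j ∈ Finset.range (n + v + 1), cc (p : ℤ) e n v j • h j := by
  have base0 : ∀ v, Tn 0 (h v) = ∑ j ∈ Finset.range (0 + v + 1), cc (p : ℤ) e 0 v j • h j := by
    intro v
    rw [hTn0, sum_one_spike h 1 (0 + v + 1) v (by omega) _ (fun j => ?_), one_zsmul]
    · rfl
    · by_cases hj : j = v
      · subst hj
        rw [cc_high (p : ℤ) e (by omega) (by omega) (by omega) (by omega),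
          show (j + 0 - j) / 2 = 0 from by omega, pow_zero, if_pos rfl]
      · rw [cc_nul (p : ℤ) e (by omega) (by omega), if_neg hj]
  have base1 : ∀ v, Tn 1 (h v) = ∑ j ∈ Finset.range (1 + v + 1), cc (p : ℤ) e 1 v j • h j := by
    intro v
    rw [hTn1]
    cases v with
    | zero =>
        rw [sum_two_spikes h e (p : ℤ) (1 + 0 + 1) 0 1 (by omega) (by omega) _ (fun j => ?_)]
        · exact hR0
        · match j with
          | 0 =>
              rw [cc_low (p : ℤ) e (by norm_num)]
              norm_num
          | 1 =>
              rw [cc_high (p : ℤ) e (by norm_num) (by norm_num) (by norm_num) (by norm_num)]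
              norm_num
          | (j + 2) =>
              rw [cc_nul (p : ℤ) e (by omega) (by omega), if_neg (by omega), if_neg (by omega)]
              norm_num
    | succ v' =>
        rw [sum_two_spikes h 1 (p : ℤ) (1 + (v' + 1) + 1) v' (v' + 2) (by omega) (by omega)
          _ (fun j => ?_)]
        · rw [one_zsmul]; exact hR1 v'
        · by_cases hj : j = v'
          · subst hj
            rw [cc_high (p : ℤ) e (by omega) (by omega) (by omega) (by omega),
              show (j + 1 - (j + 1)) / 2 = 0 from by omega, pow_zero,
              if_pos rfl, if_neg (by omega), add_zero]
          · by_cases hj2 : j = v' + 2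
            · subst hj2
              rw [cc_high (p : ℤ) e (by omega) (by omega) (by omega) (by omega),
                show (v' + 2 + 1 - (v' + 1)) / 2 = 1 from by omega, pow_one,
                if_neg (by omega), if_pos rfl, zero_add]
            · rw [cc_nul (p : ℤ) e (by omega) (by omega), if_neg hj, if_neg hj2, add_zero]
  have step : ∀ k : ℕ,
      (∀ v, Tn k (h v) = ∑ j ∈ Finset.range (k + v + 1), cc (p : ℤ) e k v j • h j) →
      (∀ v, Tn (k + 1) (h v)
        = ∑ j ∈ Finset.range (k + 1 + v + 1), cc (p : ℤ) e (k + 1) v j • h j) →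
      ∀ v, Tn (k + 2) (h v)
        = ∑ j ∈ Finset.range (k + 2 + v + 1), cc (p : ℤ) e (k + 2) v j • h j := by
    intro k IH0 IH1 v
    have happ : Tn (k + 2) (h v) = T (Tn (k + 1) (h v)) - (p : ℤ) • Tn k (h v) := by
      rw [hTnrec k, LinearMap.sub_apply, LinearMap.comp_apply, zsmul_apply]
    rw [happ, IH1 v, IH0 v]
    have pad1 : (∑ j ∈ Finset.range (k + 1 + v + 1), cc (p : ℤ) e (k + 1) v j • h j)
        = ∑ j ∈ Finset.range (k + v + 1 + 1 + 1), cc (p : ℤ) e (k + 1) v j • h j := by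
      rw [Finset.sum_range_succ (n := k + v + 1 + 1), cc_bound _ _ (by omega), zero_zsmul,
        add_zero, show k + 1 + v + 1 = k + v + 1 + 1 from by omega]
    rw [pad1, Tsum T h (p : ℤ) e hR0 hR1 _ (k + v + 1) (cc_bound _ _ (by omega))
      (cc_bound _ _ (by omega))]
    have pad0 : (∑ j ∈ Finset.range (k + v + 1), cc (p : ℤ) e k v j • h j)
        = ∑ j ∈ Finset.range (k + v + 1 + 1 + 1), cc (p : ℤ) e k v j • h j := by
      rw [Finset.sum_range_succ (n := k + v + 1 + 1), Finset.sum_range_succ (n := k + v + 1),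
        cc_bound _ _ (by omega), cc_bound _ _ (by omega), zero_zsmul, zero_zsmul,
        add_zero, add_zero]
    rw [pad0, zsmul_sum, show k + 2 + v + 1 = k + v + 1 + 1 + 1 from by omega,
      ← Finset.sum_sub_distrib]
    refine Finset.sum_congr rfl fun m _ => ?_
    rw [← mul_zsmul, ← sub_zsmul', cc_rec (p : ℤ) e k v m]
  have main : ∀ n : ℕ,
      (∀ v, Tn n (h v) = ∑ j ∈ Finset.range (n + v + 1), cc (p : ℤ) e n v j • h j)
      ∧ (∀ v, Tn (n + 1) (h v)
          = ∑ j ∈ Finset.range (n + 1 + v + 1), cc (p : ℤ) e (n + 1) v j • h j) := by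
    intro n
    induction n with
    | zero => exact ⟨base0, base1⟩
    | succ k ih => exact ⟨ih.2, step k ih.1 ih.2⟩
  exact fun n => (main n).1

lemma cc_diff (P e : ℤ) (he : e ^ 3 = e) {n v : ℕ} (hvn : v ≤ n) (j : ℕ) :
    P ^ (n - v) ∣ cc P e (n + 2) v j - cc P e n v j := by
  obtain ⟨q, rfl⟩ := Nat.exists_eq_add_of_le hvn
  rw [Nat.add_sub_cancel_left]
  by_cases h1 : j < q
  · have A1 : cc P e (v + q + 2) v j = e ^ (q - j - 1 + 3) * P ^ j := by
      have hh : v + q + 2 - v - j = q - j - 1 + 3 := by omega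
      rw [cc_low P e (by omega), hh]
    have A2 : cc P e (v + q) v j = e ^ (q - j - 1 + 1) * P ^ j := by
      have hh : v + q - v - j = q - j - 1 + 1 := by omega
      rw [cc_low P e (by omega), hh]
    have hee : e ^ (q - j - 1 + 3) = e ^ (q - j - 1 + 1) := by
      rw [pow_add, pow_add, he, pow_one]
    rw [A1, A2, hee, sub_self]
    exact dvd_zero _
  · by_cases h2 : j = q
    · subst h2
      have A1 : cc P e (v + j + 2) v j = e ^ 2 * P ^ j := by
        have hh : v + j + 2 - v - j = 2 := by omega
        rw [cc_low P e (by omega), hh]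
      have A2 : cc P e (v + j) v j = P ^ j := by
        have hh : j + (v + j) - v = 2 * j := by omega
        rw [cc_high P e (by omega) (by omega) (by omega) (by omega), hh]
        have : 2 * j / 2 = j := by omega
        rw [this]
      rw [A1, A2]
      exact ⟨e ^ 2 - 1, by ring⟩
    · by_cases h3 : j = q + 1
      · subst h3
        have A1 : cc P e (v + q + 2) v (q + 1) = e ^ 1 * P ^ (q + 1) := by
          have hh : v + q + 2 - v - (q + 1) = 1 := by omega
          rw [cc_low P e (by omega), hh]
        have A2 : cc P e (v + q) v (q + 1) = 0 := cc_nul P e (by omega) (by omega)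
        rw [A1, A2]
        exact ⟨e * P, by ring⟩
      · by_cases hpar : (q + j) % 2 = 0
        · by_cases hc1 : j ≤ q + 2 * v
          · have A1 : cc P e (v + q + 2) v j = P ^ ((j + q) / 2 + 1) := by
              have hh : j + (v + q + 2) - v = 2 * ((j + q) / 2 + 1) := by omega
              rw [cc_high P e (by omega) (by omega) (by omega) (by omega), hh]
              congr 1; omega
            have A2 : cc P e (v + q) v j = P ^ ((j + q) / 2) := by
              have hh : j + (v + q) - v = 2 * ((j + q) / 2) := by omega
              rw [cc_high P e (by omega) (by omega) (by omega) (by omega), hh]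
              congr 1; omega
            rw [A1, A2]
            exact dvd_sub (pow_dvd_pow P (by omega)) (pow_dvd_pow P (by omega))
          · by_cases hc2 : j = q + 2 * v + 2
            · have A1 : cc P e (v + q + 2) v j = P ^ (q + v + 2) := by
                have hh : j + (v + q + 2) - v = 2 * (q + v + 2) := by omega
                rw [cc_high P e (by omega) (by omega) (by omega) (by omega), hh]
                congr 1; omega
              have A2 : cc P e (v + q) v j = 0 := cc_nul P e (by omega) (by omega)
              rw [A1, A2, sub_zero]
              exact pow_dvd_pow P (by omega)
            · rw [cc_nul P e (n := v + q + 2) (by omega) (by omega),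
                cc_nul P e (n := v + q) (by omega) (by omega), sub_self]
              exact dvd_zero _
        · rw [cc_nul P e (n := v + q + 2) (by omega) (by omega),
            cc_nul P e (n := v + q) (by omega) (by omega), sub_self]
          exact dvd_zero _

lemma Tn_diff
    (hTn0 : Tn 0 = LinearMap.id) (hTn1 : Tn 1 = T)
    (hTnrec : ∀ k : ℕ, Tn (k + 2) = T ∘ₗ Tn (k + 1) - (p : ℤ) • Tn k)
    (hR0 : T (h 0) = e • h 0 + (p : ℤ) • h 1)
    (hR1 : ∀ j : ℕ, T (h (j + 1)) = h j + (p : ℤ) • h (j + 2))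
    (he : e ^ 3 = e) {n v : ℕ} (hvn : v ≤ n) :
    ∃ x : M, Tn (n + 2) (h v) - Tn n (h v) = ((p : ℤ)) ^ (n - v) • x := by
  have F := Tn_formula p T Tn h e hTn0 hTn1 hTnrec hR0 hR1
  have hex : ∀ j : ℕ, ∃ d : ℤ, cc (p : ℤ) e (n + 2) v j - cc (p : ℤ) e n v j
      = (p : ℤ) ^ (n - v) * d := fun j => (cc_diff (p : ℤ) e he hvn j)
  choose d hd using hex
  refine ⟨∑ j ∈ Finset.range (n + 2 + v + 1), d j • h j, ?_⟩
  rw [F (n + 2) v, F n v]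
  have pad0 : (∑ j ∈ Finset.range (n + v + 1), cc (p : ℤ) e n v j • h j)
      = ∑ j ∈ Finset.range (n + 2 + v + 1), cc (p : ℤ) e n v j • h j := by
    rw [show n + 2 + v + 1 = n + v + 1 + 1 + 1 from by omega,
      Finset.sum_range_succ (n := n + v + 1 + 1), Finset.sum_range_succ (n := n + v + 1),
      cc_bound _ _ (by omega), cc_bound _ _ (by omega),
      zero_zsmul, zero_zsmul, add_zero, add_zero]
  rw [pad0, ← Finset.sum_sub_distrib, zsmul_sum]
  refine Finset.sum_congr rfl fun j _ => ?_
  rw [← sub_zsmul', hd j, mul_zsmul]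

end

/-- Theorem 1.1 (1): for `g = ∑_{D∈S} c(D)·g_D` with `w = max ⌊v_p(D)/2⌋`,
`T_{n+2}(g) − T_n(g) ≡ 0 mod p^{n−w}·M` for all `n ≥ w`. -/
theorem stmt_11 {p : ℕ} [Fact p.Prime] (hp : p ≠ 2)
    {M : Type*} [AddCommGroup M] [Module ℤ M]
    (g : ℕ → M) (T : M →ₗ[ℤ] M)
    (hT : ∀ D : ℕ, 0 < D →
      T (g D) = (if p ^ 2 ∣ D then g (D / p ^ 2) else 0)
        + (legendreSym p (D : ℤ)) • g D + (p : ℤ) • g (p ^ 2 * D))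
    (Tn : ℕ → M →ₗ[ℤ] M)
    (hTn0 : Tn 0 = LinearMap.id) (hTn1 : Tn 1 = T)
    (hTnrec : ∀ n : ℕ, Tn (n + 2) = T ∘ₗ Tn (n + 1) - (p : ℤ) • Tn n)
    (S : Finset ℕ) (hS : S.Nonempty) (hSpos : ∀ D ∈ S, 0 < D)
    (c : ℕ → ℤ) (G : M) (hG : G = ∑ D ∈ S, c D • g D)
    (w : ℕ) (hw : w = S.sup (fun D => padicValNat p D / 2))
    (n : ℕ) (hn : w ≤ n) :
    ∃ x : M, Tn (n + 2) G - Tn n G = ((p : ℤ) ^ (n - w)) • x := by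
  have hprime : p.Prime := Fact.out
  have hppos : 0 < p := hprime.pos
  have perD : ∀ D ∈ S, ∃ x : M, Tn (n + 2) (g D) - Tn n (g D)
      = ((p : ℤ) ^ (n - padicValNat p D / 2)) • x := by
    intro D hD
    have hDpos : 0 < D := hSpos D hD
    set v := padicValNat p D / 2 with hv
    have hvw : v ≤ w := hw ▸ Finset.le_sup (f := fun D => padicValNat p D / 2) hD
    have hvn : v ≤ n := le_trans hvw hn
    have hdvd : p ^ (2 * v) ∣ D :=
      dvd_trans (pow_dvd_pow p (by omega : 2 * v ≤ padicValNat p D)) pow_padicValNat_dvd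
    set D₀ := D / p ^ (2 * v) with hD₀
    have hD0eq : p ^ (2 * v) * D₀ = D := Nat.mul_div_cancel' hdvd
    have hD0pos : 0 < D₀ := by
      rcases Nat.eq_zero_or_pos D₀ with h0 | h0
      · exfalso; rw [← hD0eq, h0, mul_zero] at hDpos; exact lt_irrefl 0 hDpos
      · exact h0
    have hp2 : ¬ p ^ 2 ∣ D₀ := by
      intro hcon
      have hdd : p ^ (2 * v + 2) ∣ D := by
        rw [← hD0eq, pow_add]
        exact mul_dvd_mul_left _ hcon
      have hle : 2 * v + 2 ≤ padicValNat p D :=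
        (padicValNat_dvd_iff_le (by omega)).mp hdd
      omega
    set h : ℕ → M := fun j => g (p ^ (2 * j) * D₀) with hh
    set e : ℤ := legendreSym p (D₀ : ℤ) with he'
    have hjpos : ∀ j : ℕ, 0 < p ^ (2 * j) * D₀ := fun j =>
      Nat.mul_pos (Nat.pow_pos hppos) hD0pos
    have hR0 : T (h 0) = e • h 0 + (p : ℤ) • h 1 := by
      show T (g (p ^ (2 * 0) * D₀)) = e • g (p ^ (2 * 0) * D₀) + (p : ℤ) • g (p ^ (2 * 1) * D₀)
      rw [show p ^ (2 * 0) * D₀ = D₀ from by ring_nf, hT D₀ hD0pos, if_neg hp2,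
        show p ^ 2 * D₀ = p ^ (2 * 1) * D₀ from by ring_nf, zero_add]
    have hR1 : ∀ j : ℕ, T (h (j + 1)) = h j + (p : ℤ) • h (j + 2) := by
      intro j
      show T (g (p ^ (2 * (j + 1)) * D₀))
        = g (p ^ (2 * j) * D₀) + (p : ℤ) • g (p ^ (2 * (j + 2)) * D₀)
      have hdv : p ^ 2 ∣ p ^ (2 * (j + 1)) * D₀ := ⟨p ^ (2 * j) * D₀, by ring⟩
      have hquot : p ^ (2 * (j + 1)) * D₀ / p ^ 2 = p ^ (2 * j) * D₀ := by
        rw [show p ^ (2 * (j + 1)) * D₀ = p ^ 2 * (p ^ (2 * j) * D₀) from by ring]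
        exact Nat.mul_div_cancel_left _ (Nat.pow_pos hppos)
      have hleg : legendreSym p ((p ^ (2 * (j + 1)) * D₀ : ℕ) : ℤ) = 0 := by
        rw [legendreSym.eq_zero_iff]
        push_cast
        rw [ZMod.natCast_self]
        rw [zero_pow (by omega : 2 * (j + 1) ≠ 0), zero_mul]
      rw [hT _ (hjpos (j + 1)), if_pos hdv, hquot, hleg, zero_zsmul, add_zero,
        show p ^ 2 * (p ^ (2 * (j + 1)) * D₀) = p ^ (2 * (j + 2)) * D₀ from by ring]
    have hee : e ^ 3 = e := by
      by_cases h0 : ((D₀ : ℤ) : ZMod p) = 0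
      · rw [he', (legendreSym.eq_zero_iff p _).mpr h0]; norm_num
      · rcases legendreSym.eq_one_or_neg_one p h0 with h1 | h1 <;> rw [he', h1] <;> norm_num
    have hDv : h v = g D := by
      show g (p ^ (2 * v) * D₀) = g D
      rw [hD0eq]
    obtain ⟨x, hx⟩ := Tn_diff p T Tn h e hTn0 hTn1 hTnrec hR0 hR1 hee hvn
    rw [hDv] at hx
    exact ⟨x, hx⟩
  choose! xf hxf using perD
  refine ⟨∑ D ∈ S, (c D * (p : ℤ) ^ (w - padicValNat p D / 2)) • xf D, ?_⟩
  rw [hG, map_sum, map_sum, ← Finset.sum_sub_distrib, zsmul_sum]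
  refine Finset.sum_congr rfl fun D hD => ?_
  have hvw : padicValNat p D / 2 ≤ w :=
    hw ▸ Finset.le_sup (f := fun D => padicValNat p D / 2) hD
  have hsplit : n - padicValNat p D / 2 = (n - w) + (w - padicValNat p D / 2) := by omega
  rw [map_zsmul, map_zsmul, ← zsmul_sub, hxf D hD, ← mul_zsmul, ← mul_zsmul, hsplit, pow_add]
  congr 1
  ring
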